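/- Let P be an L-convex polyomino and let the horizontal projection vector H_P = (h_1,...,h_n) record the number of cells in each row and V_P = (v_1,...,v_m) the number of cells in each column. Then both H_P and V_P are unimodal: there is an index i such that h_1 ≤ ... ≤ h_i ≥ ... ≥ h_n, and similarly for V_P. -/

import Mathlib

/-- Two cells of `ℤ × ℤ` are adjacent if they share an edge. -/
def CellAdj (a b : ℤ × ℤ) : Prop :=
  (a.1 = b.1 ∧ (a.2 = b.2 + 1 ∨ b.2 = a.2 + 1)) ∨
  (a.2 = b.2 ∧ (a.1 = b.1 + 1 ∨ b.1 = a.1 + 1))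

/-- `P` is an L-convex polyomino: it is row convex, column convex, and any two of
its cells are joined by a path of distinct cells of `P` with at most one change of
direction. Cells are recorded as `(row, column)`. -/
def IsLConvex (P : Finset (ℤ × ℤ)) : Prop :=
  (∀ i j j' j'' : ℤ, (i, j) ∈ P → (i, j'') ∈ P → j ≤ j' → j' ≤ j'' → (i, j') ∈ P) ∧
  (∀ i i' i'' j : ℤ, (i, j) ∈ P → (i'', j) ∈ P → i ≤ i' → i' ≤ i'' → (i', j) ∈ P) ∧
  (∀ a ∈ P, ∀ b ∈ P, ∃ (k : ℕ) (c : ℕ → ℤ × ℤ),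
    c 0 = a ∧ c k = b ∧ (∀ i ≤ k, c i ∈ P) ∧
    (∀ i < k, CellAdj (c i) (c (i + 1))) ∧
    (∀ i j, i ≤ k → j ≤ k → c i = c j → i = j) ∧
    ((Finset.Ioo 0 k).filter (fun i =>
      (c (i - 1)).1 ≠ (c (i + 1)).1 ∧ (c (i - 1)).2 ≠ (c (i + 1)).2)).card ≤ 1)

/-- Number of cells of `P` in row `i`. -/
def rowCount (P : Finset (ℤ × ℤ)) (i : ℤ) : ℕ := (P.filter (fun c => c.1 = i)).card

/-- Number of cells of `P` in column `j`. -/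
def colCount (P : Finset (ℤ × ℤ)) (j : ℤ) : ℕ := (P.filter (fun c => c.2 = j)).card

/-- The corner property of L-convex polyominoes. -/
lemma corner_prop (P : Finset (ℤ × ℤ)) (hP : IsLConvex P) :
    ∀ a ∈ P, ∀ b ∈ P, (a.1, b.2) ∈ P ∨ (b.1, a.2) ∈ P := by
  intro a ha b hb
  obtain ⟨k, c, hc0, hck, hmem, hadj, hinj, hturn⟩ := hP.2.2 a ha b hb
  subst hc0; subst hck
  set T := (Finset.Ioo 0 k).filter (fun i =>
      (c (i - 1)).1 ≠ (c (i + 1)).1 ∧ (c (i - 1)).2 ≠ (c (i + 1)).2) with hT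
  have hstep : ∀ s, s < k → ((c s).1 = (c (s+1)).1 ∧ (c s).2 ≠ (c (s+1)).2) ∨
      ((c s).2 = (c (s+1)).2 ∧ (c s).1 ≠ (c (s+1)).1) := by
    intro s hs
    have h := hadj s hs
    unfold CellAdj at h
    omega
  have hprop : ∀ s, s + 1 < k → (s+1) ∉ T →
      ((c s).1 = (c (s+1)).1 ↔ (c (s+1)).1 = (c (s+2)).1) := by
    intro s hs hnot
    have hm : ¬((c s).1 ≠ (c (s+2)).1 ∧ (c s).2 ≠ (c (s+2)).2) := by
      intro hcontra
      apply hnot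
      simp only [hT, Finset.mem_filter, Finset.mem_Ioo, Nat.add_sub_cancel]
      exact ⟨⟨Nat.succ_pos s, hs⟩, hcontra⟩
    have h1 := hstep s (by omega)
    have h2 : ((c (s+1)).1 = (c (s+2)).1 ∧ (c (s+1)).2 ≠ (c (s+2)).2) ∨
        ((c (s+1)).2 = (c (s+2)).2 ∧ (c (s+1)).1 ≠ (c (s+2)).1) := hstep (s+1) hs
    omega
  have horient : ∀ s1 s2, s1 ≤ s2 → s2 < k → (∀ t, s1 < t → t ≤ s2 → t ∉ T) →
      ((c s1).1 = (c (s1+1)).1 ↔ (c s2).1 = (c (s2+1)).1) := by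
    intro s1 s2 h12
    induction s2, h12 using Nat.le_induction with
    | base => intro _ _; rfl
    | succ n hn ih =>
      intro hk hnt
      have h1 : n < k := by omega
      have hih := ih h1 (fun t ht1 ht2 => hnt t ht1 (by omega))
      rw [hih]
      exact hprop n hk (hnt (n+1) (by omega) le_rfl)
  have hhrun : ∀ u v, u ≤ v → v ≤ k → (∀ s, u ≤ s → s < v → (c s).1 = (c (s+1)).1) →
      (c u).1 = (c v).1 := by
    intro u v huv
    induction v, huv using Nat.le_induction with
    | base => intro _ _; rfl
    | succ n hn ih =>
      intro hk hall
      rw [ih (by omega) (fun s h1 h2 => hall s h1 (by omega))]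
      exact hall n hn (by omega)
  have hvrun : ∀ u v, u ≤ v → v ≤ k → (∀ s, u ≤ s → s < v → (c s).2 = (c (s+1)).2) →
      (c u).2 = (c v).2 := by
    intro u v huv
    induction v, huv using Nat.le_induction with
    | base => intro _ _; rfl
    | succ n hn ih =>
      intro hk hall
      rw [ih (by omega) (fun s h1 h2 => hall s h1 (by omega))]
      exact hall n hn (by omega)
  have hrunH : ∀ u v, u < v → v ≤ k → (∀ t, u < t → t < v → t ∉ T) →
      (c u).1 = (c (u+1)).1 → (c u).1 = (c v).1 := by
    intro u v huv hvk hnt h0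
    exact hhrun u v (le_of_lt huv) hvk (fun s hs1 hs2 =>
      (horient u s hs1 (by omega) (fun t ht1 ht2 => hnt t ht1 (by omega))).mp h0)
  have hrunV : ∀ u v, u < v → v ≤ k → (∀ t, u < t → t < v → t ∉ T) →
      (c u).2 = (c (u+1)).2 → (c u).2 = (c v).2 := by
    intro u v huv hvk hnt h0
    have hu1 : ¬ (c u).1 = (c (u+1)).1 := by
      have hu : ((c u).1 = (c (u+1)).1 ∧ (c u).2 ≠ (c (u+1)).2) ∨
          ((c u).2 = (c (u+1)).2 ∧ (c u).1 ≠ (c (u+1)).1) := hstep u (by omega)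
      omega
    refine hvrun u v (le_of_lt huv) hvk (fun s hs1 hs2 => ?_)
    have hs1' : ¬ (c s).1 = (c (s+1)).1 := fun h =>
      hu1 ((horient u s hs1 (by omega) (fun t ht1 ht2 => hnt t ht1 (by omega))).mpr h)
    have := hstep s (by omega)
    omega
  rcases Nat.eq_zero_or_pos k with hk0 | hkpos
  · subst hk0
    left
    simpa using hmem 0 le_rfl
  by_cases hTe : T = ∅
  · have hnt : ∀ t : ℕ, 0 < t → t < k → t ∉ T := by simp [hTe]
    by_cases h0 : (c 0).1 = (c 1).1
    · have hA := hrunH 0 k hkpos le_rfl (fun t h1 h2 => hnt t h1 h2) h0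
      left
      rw [hA]
      simpa using hmem k le_rfl
    · have h0' : (c 0).2 = (c 1).2 := by
        have hz : ((c 0).1 = (c 1).1 ∧ (c 0).2 ≠ (c 1).2) ∨
            ((c 0).2 = (c 1).2 ∧ (c 0).1 ≠ (c 1).1) := hstep 0 hkpos
        omega
      have hA := hrunV 0 k hkpos le_rfl (fun t h1 h2 => hnt t h1 h2) h0'
      right
      rw [hA]
      simpa using hmem k le_rfl
  · obtain ⟨t, htT⟩ := Finset.nonempty_iff_ne_empty.mpr hTe
    have huniq : ∀ t' ∈ T, t' = t := fun t' ht' =>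
      Finset.card_le_one.mp hturn t' ht' t htT
    have htIoo : 0 < t ∧ t < k := by
      have h := htT
      simp only [hT, Finset.mem_filter, Finset.mem_Ioo] at h
      exact h.1
    have hnt1 : ∀ s : ℕ, 0 < s → s < t → s ∉ T := by
      intro s h1 h2 hs; have := huniq s hs; omega
    have hnt2 : ∀ s : ℕ, t < s → s < k → s ∉ T := by
      intro s h1 h2 hs; have := huniq s hs; omega
    by_cases h0 : (c 0).1 = (c 1).1 <;> by_cases ht : (c t).1 = (c (t+1)).1
    · have hA := hrunH 0 t htIoo.1 (le_of_lt htIoo.2) hnt1 h0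
      have hB := hrunH t k htIoo.2 le_rfl hnt2 ht
      left
      rw [hA.trans hB]
      simpa using hmem k le_rfl
    · have hA := hrunH 0 t htIoo.1 (le_of_lt htIoo.2) hnt1 h0
      have ht' : (c t).2 = (c (t+1)).2 := by
        have hz : ((c t).1 = (c (t+1)).1 ∧ (c t).2 ≠ (c (t+1)).2) ∨
            ((c t).2 = (c (t+1)).2 ∧ (c t).1 ≠ (c (t+1)).1) := hstep t htIoo.2
        omega
      have hB := hrunV t k htIoo.2 le_rfl hnt2 ht'
      left
      rw [hA, ← hB]
      simpa using hmem t (le_of_lt htIoo.2)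
    · have h0' : (c 0).2 = (c 1).2 := by
        have hz : ((c 0).1 = (c 1).1 ∧ (c 0).2 ≠ (c 1).2) ∨
            ((c 0).2 = (c 1).2 ∧ (c 0).1 ≠ (c 1).1) := hstep 0 hkpos
        omega
      have hA := hrunV 0 t htIoo.1 (le_of_lt htIoo.2) hnt1 h0'
      have hB := hrunH t k htIoo.2 le_rfl hnt2 ht
      right
      rw [hA, ← hB]
      simpa using hmem t (le_of_lt htIoo.2)
    · have h0' : (c 0).2 = (c 1).2 := by
        have hz : ((c 0).1 = (c 1).1 ∧ (c 0).2 ≠ (c 1).2) ∨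
            ((c 0).2 = (c 1).2 ∧ (c 0).1 ≠ (c 1).1) := hstep 0 hkpos
        omega
      have ht' : (c t).2 = (c (t+1)).2 := by
        have hz : ((c t).1 = (c (t+1)).1 ∧ (c t).2 ≠ (c (t+1)).2) ∨
            ((c t).2 = (c (t+1)).2 ∧ (c t).1 ≠ (c (t+1)).1) := hstep t htIoo.2
        omega
      have hA := hrunV 0 t htIoo.1 (le_of_lt htIoo.2) hnt1 h0'
      have hB := hrunV t k htIoo.2 le_rfl hnt2 ht'
      right
      rw [hA.trans hB]
      simpa using hmem k le_rfl

lemma count_le_of_subrow (P : Finset (ℤ × ℤ)) (r r' : ℤ)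
    (h : ∀ j : ℤ, (r, j) ∈ P → (r', j) ∈ P) : rowCount P r ≤ rowCount P r' := by
  unfold rowCount
  apply Finset.card_le_card_of_injOn (fun x => (r', x.2))
  · intro x hx
    simp only [Finset.mem_coe, Finset.mem_filter] at hx
    refine Finset.mem_filter.mpr ⟨h x.2 ?_, rfl⟩
    rw [← hx.2]
    exact hx.1
  · intro x hx y hy hxy
    simp only [Finset.coe_filter, Set.mem_setOf_eq] at hx hy
    simp only [Prod.mk.injEq, true_and] at hxy
    exact Prod.ext_iff.mpr ⟨hx.2.trans hy.2.symm, hxy⟩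

lemma nested (P : Finset (ℤ × ℤ))
    (hcorner : ∀ a ∈ P, ∀ b ∈ P, (a.1, b.2) ∈ P ∨ (b.1, a.2) ∈ P) (r r' : ℤ) :
    (∀ j : ℤ, (r, j) ∈ P → (r', j) ∈ P) ∨ (∀ j : ℤ, (r', j) ∈ P → (r, j) ∈ P) := by
  by_contra hc
  push_neg at hc
  obtain ⟨⟨j, hj, hj'⟩, ⟨j', hj2, hj2'⟩⟩ := hc
  rcases hcorner (r, j) hj (r', j') hj2 with h | h
  · exact hj2' h
  · exact hj' h

lemma rowUnimodal (P : Finset (ℤ × ℤ)) (hne : P.Nonempty)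
    (hcol : ∀ i i' i'' j : ℤ, (i, j) ∈ P → (i'', j) ∈ P → i ≤ i' → i' ≤ i'' → (i', j) ∈ P)
    (hcorner : ∀ a ∈ P, ∀ b ∈ P, (a.1, b.2) ∈ P ∨ (b.1, a.2) ∈ P) :
    ∃ i : ℤ, (∀ a b : ℤ, a ≤ b → b ≤ i → rowCount P a ≤ rowCount P b) ∧
      (∀ a b : ℤ, i ≤ a → a ≤ b → rowCount P b ≤ rowCount P a) := by
  obtain ⟨i, hiS, hmax⟩ := Finset.exists_max_image (P.image Prod.fst) (rowCount P) (hne.image _)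
  have hmax' : ∀ r : ℤ, rowCount P r ≤ rowCount P i := by
    intro r
    by_cases hr : r ∈ P.image Prod.fst
    · exact hmax r hr
    · have h0 : rowCount P r = 0 := by
        rw [rowCount, Finset.card_eq_zero, Finset.filter_eq_empty_iff]
        intro x hx hx1
        exact hr (Finset.mem_image.mpr ⟨x, hx, hx1⟩)
      omega
  refine ⟨i, ?_, ?_⟩
  · intro a b hab hbi
    rcases nested P hcorner a i with h | h
    · exact count_le_of_subrow P a b (fun j hj => hcol a b i j hj (h j hj) hab hbi)
    · calc rowCount P a ≤ rowCount P i := hmax' a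
        _ ≤ rowCount P b := count_le_of_subrow P i b
            (fun j hj => hcol a b i j (h j hj) hj hab hbi)
  · intro a b hia hab
    rcases nested P hcorner b i with h | h
    · exact count_le_of_subrow P b a (fun j hj => hcol i a b j (h j hj) hj hia hab)
    · calc rowCount P b ≤ rowCount P i := hmax' b
        _ ≤ rowCount P a := count_le_of_subrow P i a
            (fun j hj => hcol i a b j hj (h j hj) hia hab)

/-- The horizontal and vertical projection vectors of an L-convex polyomino are
unimodal: there is a row index `i` with `rowCount` weakly increasing up to `i` and
weakly decreasing afterwards, and similarly a column index for `colCount`. -/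
theorem stmt6 (P : Finset (ℤ × ℤ)) (hne : P.Nonempty) (hP : IsLConvex P) :
    (∃ i : ℤ, (∀ a b : ℤ, a ≤ b → b ≤ i → rowCount P a ≤ rowCount P b) ∧
      (∀ a b : ℤ, i ≤ a → a ≤ b → rowCount P b ≤ rowCount P a)) ∧
    (∃ j : ℤ, (∀ a b : ℤ, a ≤ b → b ≤ j → colCount P a ≤ colCount P b) ∧
      (∀ a b : ℤ, j ≤ a → a ≤ b → colCount P b ≤ colCount P a)) := by
  constructor
  · exact rowUnimodal P hne hP.2.1 (corner_prop P hP)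
  · set Q := P.image Prod.swap with hQ
    have hQmem : ∀ x y : ℤ, (x, y) ∈ Q ↔ (y, x) ∈ P := by
      intro x y
      constructor
      · intro h
        obtain ⟨p, hp, hpe⟩ := Finset.mem_image.mp h
        have hpy : p = (y, x) := by
          have := congrArg Prod.swap hpe
          simpa using this
        rwa [hpy] at hp
      · intro h
        exact Finset.mem_image.mpr ⟨(y, x), h, rfl⟩
    have hQne : Q.Nonempty := hne.image _
    have hQcol : ∀ i i' i'' j : ℤ, (i, j) ∈ Q → (i'', j) ∈ Q → i ≤ i' → i' ≤ i'' →
        (i', j) ∈ Q := by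
      intro i i' i'' j h1 h2 hle1 hle2
      rw [hQmem] at h1 h2 ⊢
      exact hP.1 j i i' i'' h1 h2 hle1 hle2
    have hQcorner : ∀ a ∈ Q, ∀ b ∈ Q, (a.1, b.2) ∈ Q ∨ (b.1, a.2) ∈ Q := by
      intro a haQ b hbQ
      have ha : (a.2, a.1) ∈ P := (hQmem a.1 a.2).mp haQ
      have hb : (b.2, b.1) ∈ P := (hQmem b.1 b.2).mp hbQ
      rcases corner_prop P hP (a.2, a.1) ha (b.2, b.1) hb with h | h
      · right; rw [hQmem]; exact h
      · left; rw [hQmem]; exact h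
    obtain ⟨j, hj1, hj2⟩ := rowUnimodal Q hQne hQcol hQcorner
    have hcount : ∀ r : ℤ, rowCount Q r = colCount P r := by
      intro r
      rw [rowCount, colCount]
      have hfe : Q.filter (fun c => c.1 = r) =
          (P.filter (fun c => c.2 = r)).image Prod.swap := by
        ext ⟨x, y⟩
        simp only [Finset.mem_filter, Finset.mem_image]
        constructor
        · rintro ⟨hxy, hx⟩
          exact ⟨(y, x), ⟨(hQmem x y).mp hxy, hx⟩, rfl⟩
        · rintro ⟨p, ⟨hp, hp2⟩, hpe⟩
          have hpy : p = (y, x) := by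
            have := congrArg Prod.swap hpe
            simpa using this
          subst hpy
          exact ⟨(hQmem x y).mpr hp, hp2⟩
      rw [hfe, Finset.card_image_of_injective _ Prod.swap_injective]
    exact ⟨j, fun a b h1 h2 => by rw [← hcount, ← hcount]; exact hj1 a b h1 h2,
           fun a b h1 h2 => by rw [← hcount, ← hcount]; exact hj2 a b h1 h2⟩
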